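/- arXiv:2510.20446 — 3 statements merged into one kernel-verified Lean document; each statement's English description precedes it below -/
import Mathlib

section
/- If A is an (m,4,3)-perfect system of difference sets, then A together with the additional block {0, 1, 6m+4, 6m+6} forms an (m+1,4,1)-perfect system of difference sets. -/
/-- The multiset of positive differences of a finite set of naturals. -/
def posDiffs (B : Finset ℕ) : Multiset ℕ :=
  ((B ×ˢ B).filter (fun p => p.2 < p.1)).val.map (fun p => p.1 - p.2)

/-- `A` is an `(m,k,c)`-perfect system of difference sets: a collection of `m`
`k`-subsets of the nonnegative integers whose positive differences cover each
element of `{c, c+1, …, c−1+m·k(k−1)/2}` exactly once. -/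
def IsPSDS (m k c : ℕ) (A : Multiset (Finset ℕ)) : Prop :=
  Multiset.card A = m ∧ (∀ B ∈ A, B.card = k) ∧
  ∀ d ∈ Finset.Icc c (c - 1 + m * (k * (k - 1) / 2)), (A.bind posDiffs).count d = 1

theorem posDiffs_four (a b c d : ℕ) (h1 : a < b) (h2 : b < c) (h3 : c < d) :
    posDiffs {a,b,c,d} = {b-a, c-a, d-a, c-b, d-b, d-c} := by
  have hf : (({a,b,c,d} : Finset ℕ) ×ˢ {a,b,c,d}).filter (fun p => p.2 < p.1) =
      {(b,a),(c,a),(d,a),(c,b),(d,b),(d,c)} := by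
    ext ⟨x,y⟩
    simp [Finset.mem_filter, Finset.mem_product, Prod.ext_iff]
    constructor
    · rintro ⟨⟨hx|hx|hx|hx, hy|hy|hy|hy⟩, hlt⟩ <;> omega
    · rintro (⟨hx,hy⟩|⟨hx,hy⟩|⟨hx,hy⟩|⟨hx,hy⟩|⟨hx,hy⟩|⟨hx,hy⟩) <;> subst hx <;> subst hy <;> omega
  unfold posDiffs
  rw [hf]
  have hv : (({(b,a),(c,a),(d,a),(c,b),(d,b),(d,c)} : Finset (ℕ×ℕ))).val =
      ((b,a) ::ₘ (c,a) ::ₘ (d,a) ::ₘ (c,b) ::ₘ (d,b) ::ₘ {(d,c)}) := by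
    simp only [Finset.insert_val]
    rw [Multiset.ndinsert_of_notMem, Multiset.ndinsert_of_notMem,
        Multiset.ndinsert_of_notMem, Multiset.ndinsert_of_notMem,
        Multiset.ndinsert_of_notMem] <;>
      simp [Prod.ext_iff] <;> omega
  rw [hv]
  simp only [Multiset.map_cons, Multiset.map_singleton]
  rfl

theorem four_elems (B : Finset ℕ) (hB : B.card = 4) :
    ∃ a b c d, a < b ∧ b < c ∧ c < d ∧ B = {a,b,c,d} := by
  have hl : (B.sort (· ≤ ·)).length = 4 := by rw [Finset.length_sort]; exact hB
  have hs : List.Pairwise (· < ·) (B.sort (· ≤ ·)) := by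
    exact (Finset.sortedLT_sort B).pairwise
  have htf : (B.sort (· ≤ ·)).toFinset = B := Finset.sort_toFinset _ _
  match hm : B.sort (· ≤ ·), hl with
  | [a,b,c,d], _ =>
    rw [hm] at hs htf
    simp only [List.pairwise_cons, List.mem_cons] at hs
    exact ⟨a,b,c,d, hs.1 b (Or.inl rfl), hs.2.1 c (Or.inl rfl), hs.2.2.1 d (Or.inl rfl),
      by rw [← htf]; ext x; simp⟩

theorem card_posDiffs_four (B : Finset ℕ) (hB : B.card = 4) :
    Multiset.card (posDiffs B) = 6 := by
  obtain ⟨a,b,c,d,h1,h2,h3,rfl⟩ := four_elems B hB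
  rw [posDiffs_four a b c d h1 h2 h3]
  rfl

/-- Adjoining the block `{0, 1, 6m+4, 6m+6}` to an `(m,4,3)`-PSDS yields an
`(m+1,4,1)`-PSDS. -/
theorem stmt4 (m : ℕ) (A : Multiset (Finset ℕ)) (h : IsPSDS m 4 3 A) :
    IsPSDS (m + 1) 4 1 (({0, 1, 6 * m + 4, 6 * m + 6} : Finset ℕ) ::ₘ A) := by
  obtain ⟨hcard, hk, hcount⟩ := h
  -- the new block has card 4
  have hnew4 : ({0, 1, 6 * m + 4, 6 * m + 6} : Finset ℕ).card = 4 := by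
    rw [Finset.card_insert_of_notMem (by simp), Finset.card_insert_of_notMem (by simp),
        Finset.card_pair (by omega)]
  -- total card of old differences
  have hScard : Multiset.card (A.bind posDiffs) = 6 * m := by
    rw [Multiset.card_bind]
    have : A.map (fun B => Multiset.card (posDiffs B)) = A.map (fun _ => 6) :=
      Multiset.map_congr rfl (fun B hB => card_posDiffs_four B (hk B hB))
    rw [Function.comp_def, this, Multiset.map_const', Multiset.sum_replicate, hcard, smul_eq_mul]
    omega
  -- the old differences are exactly Icc 3 (6m+2)
  have hIcc : (Finset.Icc 3 (2 + m * 6)).val = A.bind posDiffs := by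
    apply Multiset.eq_of_le_of_card_le
    · rw [Multiset.le_iff_count]
      intro d
      by_cases hd : d ∈ Finset.Icc 3 (2 + m * 6)
      · rw [Multiset.count_eq_one_of_mem (Finset.Icc 3 (2 + m * 6)).nodup hd,
            hcount d (by simpa using hd)]
      · rw [Multiset.count_eq_zero_of_notMem (by simpa using hd)]
        exact Nat.zero_le _
    · rw [hScard]
      simp [Nat.card_Icc]
      omega
  have hSc : ∀ d, (A.bind posDiffs).count d
      = if 3 ≤ d ∧ d ≤ 2 + m * 6 then 1 else 0 := by
    intro d
    rw [← hIcc]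
    by_cases hd : d ∈ Finset.Icc 3 (2 + m * 6)
    · rw [Multiset.count_eq_one_of_mem (Finset.Icc 3 (2 + m * 6)).nodup hd,
          if_pos (by simpa [Finset.mem_Icc] using hd)]
    · rw [Multiset.count_eq_zero_of_notMem (by simpa using hd),
          if_neg (by simpa [Finset.mem_Icc] using hd)]
  -- compute posDiffs of the new block
  have hnewD : posDiffs ({0, 1, 6 * m + 4, 6 * m + 6} : Finset ℕ) =
      {1, 6*m+4, 6*m+6, 6*m+3, 6*m+5, 2} := by
    have := posDiffs_four 0 1 (6*m+4) (6*m+6) (by omega) (by omega) (by omega)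
    simpa using this
  refine ⟨by simp [hcard], ?_, ?_⟩
  · intro B hB
    rcases Multiset.mem_cons.1 hB with h | h
    · rw [h]; exact hnew4
    · exact hk B h
  · intro d hd
    simp only [Finset.mem_Icc] at hd
    rw [Multiset.cons_bind, Multiset.count_add, hnewD, hSc d]
    simp only [Multiset.insert_eq_cons, Multiset.count_cons, Multiset.count_singleton]
    split_ifs <;> omega
end

section
/- For every even integer t ≥ 2 and v = 12t+1, the collection consisting of the blocks F_{1,i} = {0, 3t+i, 2i} for 1 ≤ i ≤ t−1 with i ≠ t/2, the blocks F_{2,i} = {0, 5t+i, 2i+1} for 0 ≤ i ≤ t−1, together with B_1 = {0, t, 3t} and B_2 = {0, 5t/2, 6t}, forms a (v,3,1)-perfect difference family: the positive differences cover each element of {1, 2, ..., 6t} exactly once. -/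
/-- `F` is a `(v,k,λ)`-perfect difference family. -/
def IsPDF (v k lam : ℕ) (F : Multiset (Finset ℕ)) : Prop :=
  Odd v ∧ (∀ B ∈ F, B.card = k ∧ B ⊆ Finset.range v) ∧
  ∀ d ∈ Finset.Icc 1 ((v - 1) / 2), (F.bind posDiffs).count d = lam

theorem posDiffs_triple (a b : ℕ) (h0 : 0 < a) (hab : a < b) :
    posDiffs {0, a, b} = {a, b, b - a} := by
  unfold posDiffs
  rw [show ({0, a, b} : Finset ℕ) ×ˢ ({0, a, b} : Finset ℕ) =
    {(0,0),(0,a),(0,b),(a,0),(a,a),(a,b),(b,0),(b,a),(b,b)} by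
      ext ⟨x, y⟩; simp [Finset.mem_product, Prod.ext_iff]; tauto]
  rw [show ({(0,0),(0,a),(0,b),(a,0),(a,a),(a,b),(b,0),(b,a),(b,b)} : Finset (ℕ×ℕ)).filter
      (fun p => p.2 < p.1) = {(a,0),(b,0),(b,a)} by
      ext ⟨x, y⟩; simp [Prod.ext_iff]; omega]
  rw [Finset.insert_val_of_notMem (by simp [Prod.ext_iff]; omega),
      Finset.insert_val_of_notMem (by simp [Prod.ext_iff]; omega)]
  simp

theorem card_triple (a b : ℕ) (h0 : 0 < a) (hab : a < b) :
    ({0, a, b} : Finset ℕ).card = 3 := by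
  rw [Finset.card_insert_of_notMem (by simp; omega),
      Finset.card_insert_of_notMem (by simp; omega), Finset.card_singleton]

/-- card of a filter cut out by an "at most one solution" predicate. -/
theorem card_filter_cond (S : Finset ℕ) (p : ℕ → Prop) [DecidablePred p]
    (c : Prop) [Decidable c] (w : ℕ)
    (h : ∀ i, (i ∈ S ∧ p i) ↔ (c ∧ i = w)) :
    (S.filter p).card = if c then 1 else 0 := by
  split_ifs with hc
  · rw [show S.filter p = {w} by
      ext i
      rw [Finset.mem_filter, h i, Finset.mem_singleton]
      simp [hc]]
    simp
  · rw [show S.filter p = ∅ by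
      ext i
      rw [Finset.mem_filter, h i]
      simp [hc]]
    simp

set_option maxHeartbeats 1000000 in
/-- For every even `t ≥ 2`, the blocks `{0, 3t+i, 2i}` (`1 ≤ i ≤ t−1`, `i ≠ t/2`),
`{0, 5t+i, 2i+1}` (`0 ≤ i ≤ t−1`), `{0, t, 3t}` and `{0, 5t/2, 6t}` form a
`(12t+1,3,1)`-perfect difference family. -/
theorem stmt7 (t : ℕ) (ht : Even t) (ht2 : 2 ≤ t) :
    IsPDF (12 * t + 1) 3 1
      ((((Finset.Icc 1 (t - 1)).erase (t / 2)).val.map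
          (fun i => ({0, 3 * t + i, 2 * i} : Finset ℕ))) +
       ((Finset.range t).val.map
          (fun i => ({0, 5 * t + i, 2 * i + 1} : Finset ℕ))) +
       ({({0, t, 3 * t} : Finset ℕ), {0, 5 * t / 2, 6 * t}} : Multiset (Finset ℕ))) := by
  have htm : t % 2 = 0 := Nat.even_iff.mp ht
  refine ⟨⟨6 * t, by ring⟩, ?_, ?_⟩
  · -- every block has cardinality 3 and lies in range v
    intro B hB
    simp only [Multiset.mem_add, Multiset.mem_map, Finset.mem_val, Finset.mem_erase,
      Finset.mem_Icc, Finset.mem_range, Multiset.insert_eq_cons, Multiset.mem_cons,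
      Multiset.mem_singleton] at hB
    rcases hB with ((⟨i, hi, rfl⟩ | ⟨i, hi, rfl⟩) | rfl | rfl)
    · constructor
      · rw [Finset.pair_comm (3 * t + i) (2 * i)]
        exact card_triple _ _ (by omega) (by omega)
      · intro x hx; simp at hx; simp only [Finset.mem_range]; omega
    · constructor
      · rw [Finset.pair_comm (5 * t + i) (2 * i + 1)]
        exact card_triple _ _ (by omega) (by omega)
      · intro x hx; simp at hx; simp only [Finset.mem_range]; omega
    · constructor
      · exact card_triple _ _ (by omega) (by omega)
      · intro x hx; simp at hx; simp only [Finset.mem_range]; omega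
    · constructor
      · exact card_triple _ _ (by omega) (by omega)
      · intro x hx; simp at hx; simp only [Finset.mem_range]; omega
  · -- the counting condition
    intro d hd
    rw [Finset.mem_Icc] at hd
    have hd1 : 1 ≤ d := hd.1
    have hd2 : d ≤ 6 * t := by omega
    rw [Multiset.add_bind, Multiset.add_bind, Multiset.bind_map, Multiset.bind_map]
    rw [Multiset.bind_congr (m := ((Finset.Icc 1 (t - 1)).erase (t / 2)).val)
      (f := fun i => posDiffs {0, 3 * t + i, 2 * i})
      (g := fun i => ({2 * i, 3 * t + i, 3 * t + i - 2 * i} : Multiset ℕ))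
      (fun i hi => by
        rw [Finset.mem_val, Finset.mem_erase, Finset.mem_Icc] at hi
        show posDiffs ({0, 3 * t + i, 2 * i} : Finset ℕ) = _
        rw [Finset.pair_comm (3 * t + i) (2 * i)]
        exact posDiffs_triple _ _ (by omega) (by omega))]
    rw [Multiset.bind_congr (m := (Finset.range t).val)
      (f := fun i => posDiffs {0, 5 * t + i, 2 * i + 1})
      (g := fun i => ({2 * i + 1, 5 * t + i, 5 * t + i - (2 * i + 1)} : Multiset ℕ))
      (fun i hi => by
        rw [Finset.mem_val, Finset.mem_range] at hi
        show posDiffs ({0, 5 * t + i, 2 * i + 1} : Finset ℕ) = _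
        rw [Finset.pair_comm (5 * t + i) (2 * i + 1)]
        exact posDiffs_triple _ _ (by omega) (by omega))]
    simp only [Multiset.insert_eq_cons, Multiset.cons_bind, Multiset.singleton_bind]
    rw [posDiffs_triple t (3 * t) (by omega) (by omega),
        posDiffs_triple (5 * t / 2) (6 * t) (by omega) (by omega)]
    simp only [Multiset.count_add, Multiset.count_bind]
    have key : ∀ (S : Finset ℕ) (f g h : ℕ → ℕ),
        (Multiset.map (fun i => Multiset.count d (f i ::ₘ g i ::ₘ ({h i} : Multiset ℕ))) S.val).sum =
        (S.filter (fun i => f i = d)).card + (S.filter (fun i => g i = d)).card +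
        (S.filter (fun i => h i = d)).card := by
      intro S f g h
      rw [show (Multiset.map (fun i => Multiset.count d (f i ::ₘ g i ::ₘ ({h i} : Multiset ℕ))) S.val).sum
          = ∑ i ∈ S, Multiset.count d (f i ::ₘ g i ::ₘ ({h i} : Multiset ℕ)) from rfl]
      simp only [Finset.card_filter]
      rw [← Finset.sum_add_distrib, ← Finset.sum_add_distrib]
      refine Finset.sum_congr rfl fun i _ => ?_
      simp only [Multiset.count_cons, Multiset.count_singleton]
      split_ifs <;> omega
    rw [key, key]
    rw [card_filter_cond _ _ (d % 2 = 0 ∧ 2 ≤ d ∧ d ≤ 2 * t - 2 ∧ d ≠ t) (d / 2)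
      (fun i => by rw [Finset.mem_erase, Finset.mem_Icc]; omega)]
    rw [card_filter_cond _ _ (3 * t + 1 ≤ d ∧ d ≤ 4 * t - 1 ∧ 2 * d ≠ 7 * t) (d - 3 * t)
      (fun i => by rw [Finset.mem_erase, Finset.mem_Icc]; omega)]
    rw [card_filter_cond _ _ (2 * t + 1 ≤ d ∧ d ≤ 3 * t - 1 ∧ 2 * d ≠ 5 * t) (3 * t - d)
      (fun i => by rw [Finset.mem_erase, Finset.mem_Icc]; omega)]
    rw [card_filter_cond _ _ (d % 2 = 1 ∧ d ≤ 2 * t - 1) (d / 2)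
      (fun i => by rw [Finset.mem_range]; omega)]
    rw [card_filter_cond _ _ (5 * t ≤ d ∧ d ≤ 6 * t - 1) (d - 5 * t)
      (fun i => by rw [Finset.mem_range]; omega)]
    rw [card_filter_cond _ _ (4 * t ≤ d ∧ d ≤ 5 * t - 1) (5 * t - 1 - d)
      (fun i => by rw [Finset.mem_range]; omega)]
    obtain ⟨s, rfl⟩ := ht
    rw [show 5 * (s + s) / 2 = 5 * s from by omega]
    simp only [Multiset.insert_eq_cons, Multiset.count_cons, Multiset.count_singleton]
    have hcase : (d % 2 = 1 ∧ d ≤ 2 * (s + s) - 1) ∨ (d % 2 = 0 ∧ d ≤ 2 * (s + s) - 2 ∧ d ≠ s + s) ∨ (d = s + s) ∨ (d = 2 * (s + s)) ∨ (2 * (s + s) + 1 ≤ d ∧ d ≤ 3 * (s + s) - 1 ∧ 2 * d ≠ 5 * (s + s)) ∨ (d = 5 * s) ∨ (d = 3 * (s + s)) ∨ (3 * (s + s) + 1 ≤ d ∧ d ≤ 4 * (s + s) - 1 ∧ 2 * d ≠ 7 * (s + s)) ∨ (d = 7 * s) ∨ (4 * (s + s) ≤ d ∧ d ≤ 5 *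 (s + s) - 1) ∨ (5 * (s + s) ≤ d ∧ d ≤ 6 * (s + s) - 1) ∨ (d = 6 * (s + s)) := by omega
    rcases hcase with h|h|h|h|h|h|h|h|h|h|h|h
    · rw [if_neg (show ¬(d % 2 = 0 ∧ 2 ≤ d ∧ d ≤ 2 * (s + s) - 2 ∧ d ≠ s + s) by omega)]
      rw [if_neg (show ¬(3 * (s + s) + 1 ≤ d ∧ d ≤ 4 * (s + s) - 1 ∧ 2 * d ≠ 7 * (s + s)) by omega)]
      rw [if_neg (show ¬(2 * (s + s) + 1 ≤ d ∧ d ≤ 3 * (s + s) - 1 ∧ 2 * d ≠ 5 * (s + s)) by omega)]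
      rw [if_pos (show d % 2 = 1 ∧ d ≤ 2 * (s + s) - 1 by omega)]
      rw [if_neg (show ¬(5 * (s + s) ≤ d ∧ d ≤ 6 * (s + s) - 1) by omega)]
      rw [if_neg (show ¬(4 * (s + s) ≤ d ∧ d ≤ 5 * (s + s) - 1) by omega)]
      rw [if_neg (show ¬(d = 3 * (s + s) - (s + s)) by omega)]
      rw [if_neg (show ¬(d = 3 * (s + s)) by omega)]
      rw [if_neg (show ¬(d = s + s) by omega)]
      rw [if_neg (show ¬(d = 6 * (s + s) - 5 * s) by omega)]
      rw [if_neg (show ¬(d = 6 * (s + s)) by omega)]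
      rw [if_neg (show ¬(d = 5 * s) by omega)]
    · rw [if_pos (show d % 2 = 0 ∧ 2 ≤ d ∧ d ≤ 2 * (s + s) - 2 ∧ d ≠ s + s by omega)]
      rw [if_neg (show ¬(3 * (s + s) + 1 ≤ d ∧ d ≤ 4 * (s + s) - 1 ∧ 2 * d ≠ 7 * (s + s)) by omega)]
      rw [if_neg (show ¬(2 * (s + s) + 1 ≤ d ∧ d ≤ 3 * (s + s) - 1 ∧ 2 * d ≠ 5 * (s + s)) by omega)]
      rw [if_neg (show ¬(d % 2 = 1 ∧ d ≤ 2 * (s + s) - 1) by omega)]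
      rw [if_neg (show ¬(5 * (s + s) ≤ d ∧ d ≤ 6 * (s + s) - 1) by omega)]
      rw [if_neg (show ¬(4 * (s + s) ≤ d ∧ d ≤ 5 * (s + s) - 1) by omega)]
      rw [if_neg (show ¬(d = 3 * (s + s) - (s + s)) by omega)]
      rw [if_neg (show ¬(d = 3 * (s + s)) by omega)]
      rw [if_neg (show ¬(d = s + s) by omega)]
      rw [if_neg (show ¬(d = 6 * (s + s) - 5 * s) by omega)]
      rw [if_neg (show ¬(d = 6 * (s + s)) by omega)]
      rw [if_neg (show ¬(d = 5 * s) by omega)]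
    · rw [if_neg (show ¬(d % 2 = 0 ∧ 2 ≤ d ∧ d ≤ 2 * (s + s) - 2 ∧ d ≠ s + s) by omega)]
      rw [if_neg (show ¬(3 * (s + s) + 1 ≤ d ∧ d ≤ 4 * (s + s) - 1 ∧ 2 * d ≠ 7 * (s + s)) by omega)]
      rw [if_neg (show ¬(2 * (s + s) + 1 ≤ d ∧ d ≤ 3 * (s + s) - 1 ∧ 2 * d ≠ 5 * (s + s)) by omega)]
      rw [if_neg (show ¬(d % 2 = 1 ∧ d ≤ 2 * (s + s) - 1) by omega)]
      rw [if_neg (show ¬(5 * (s + s) ≤ d ∧ d ≤ 6 * (s + s) - 1) by omega)]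
      rw [if_neg (show ¬(4 * (s + s) ≤ d ∧ d ≤ 5 * (s + s) - 1) by omega)]
      rw [if_neg (show ¬(d = 3 * (s + s) - (s + s)) by omega)]
      rw [if_neg (show ¬(d = 3 * (s + s)) by omega)]
      rw [if_pos (show d = s + s by omega)]
      rw [if_neg (show ¬(d = 6 * (s + s) - 5 * s) by omega)]
      rw [if_neg (show ¬(d = 6 * (s + s)) by omega)]
      rw [if_neg (show ¬(d = 5 * s) by omega)]
    · rw [if_neg (show ¬(d % 2 = 0 ∧ 2 ≤ d ∧ d ≤ 2 * (s + s) - 2 ∧ d ≠ s + s) by omega)]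
      rw [if_neg (show ¬(3 * (s + s) + 1 ≤ d ∧ d ≤ 4 * (s + s) - 1 ∧ 2 * d ≠ 7 * (s + s)) by omega)]
      rw [if_neg (show ¬(2 * (s + s) + 1 ≤ d ∧ d ≤ 3 * (s + s) - 1 ∧ 2 * d ≠ 5 * (s + s)) by omega)]
      rw [if_neg (show ¬(d % 2 = 1 ∧ d ≤ 2 * (s + s) - 1) by omega)]
      rw [if_neg (show ¬(5 * (s + s) ≤ d ∧ d ≤ 6 * (s + s) - 1) by omega)]
      rw [if_neg (show ¬(4 * (s + s) ≤ d ∧ d ≤ 5 * (s + s) - 1) by omega)]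
      rw [if_pos (show d = 3 * (s + s) - (s + s) by omega)]
      rw [if_neg (show ¬(d = 3 * (s + s)) by omega)]
      rw [if_neg (show ¬(d = s + s) by omega)]
      rw [if_neg (show ¬(d = 6 * (s + s) - 5 * s) by omega)]
      rw [if_neg (show ¬(d = 6 * (s + s)) by omega)]
      rw [if_neg (show ¬(d = 5 * s) by omega)]
    · rw [if_neg (show ¬(d % 2 = 0 ∧ 2 ≤ d ∧ d ≤ 2 * (s + s) - 2 ∧ d ≠ s + s) by omega)]
      rw [if_neg (show ¬(3 * (s + s) + 1 ≤ d ∧ d ≤ 4 * (s + s) - 1 ∧ 2 * d ≠ 7 * (s + s)) by omega)]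
      rw [if_pos (show 2 * (s + s) + 1 ≤ d ∧ d ≤ 3 * (s + s) - 1 ∧ 2 * d ≠ 5 * (s + s) by omega)]
      rw [if_neg (show ¬(d % 2 = 1 ∧ d ≤ 2 * (s + s) - 1) by omega)]
      rw [if_neg (show ¬(5 * (s + s) ≤ d ∧ d ≤ 6 * (s + s) - 1) by omega)]
      rw [if_neg (show ¬(4 * (s + s) ≤ d ∧ d ≤ 5 * (s + s) - 1) by omega)]
      rw [if_neg (show ¬(d = 3 * (s + s) - (s + s)) by omega)]
      rw [if_neg (show ¬(d = 3 * (s + s)) by omega)]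
      rw [if_neg (show ¬(d = s + s) by omega)]
      rw [if_neg (show ¬(d = 6 * (s + s) - 5 * s) by omega)]
      rw [if_neg (show ¬(d = 6 * (s + s)) by omega)]
      rw [if_neg (show ¬(d = 5 * s) by omega)]
    · rw [if_neg (show ¬(d % 2 = 0 ∧ 2 ≤ d ∧ d ≤ 2 * (s + s) - 2 ∧ d ≠ s + s) by omega)]
      rw [if_neg (show ¬(3 * (s + s) + 1 ≤ d ∧ d ≤ 4 * (s + s) - 1 ∧ 2 * d ≠ 7 * (s + s)) by omega)]
      rw [if_neg (show ¬(2 * (s + s) + 1 ≤ d ∧ d ≤ 3 * (s + s) - 1 ∧ 2 * d ≠ 5 * (s + s)) by omega)]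
      rw [if_neg (show ¬(d % 2 = 1 ∧ d ≤ 2 * (s + s) - 1) by omega)]
      rw [if_neg (show ¬(5 * (s + s) ≤ d ∧ d ≤ 6 * (s + s) - 1) by omega)]
      rw [if_neg (show ¬(4 * (s + s) ≤ d ∧ d ≤ 5 * (s + s) - 1) by omega)]
      rw [if_neg (show ¬(d = 3 * (s + s) - (s + s)) by omega)]
      rw [if_neg (show ¬(d = 3 * (s + s)) by omega)]
      rw [if_neg (show ¬(d = s + s) by omega)]
      rw [if_neg (show ¬(d = 6 * (s + s) - 5 * s) by omega)]
      rw [if_neg (show ¬(d = 6 * (s + s)) by omega)]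
      rw [if_pos (show d = 5 * s by omega)]
    · rw [if_neg (show ¬(d % 2 = 0 ∧ 2 ≤ d ∧ d ≤ 2 * (s + s) - 2 ∧ d ≠ s + s) by omega)]
      rw [if_neg (show ¬(3 * (s + s) + 1 ≤ d ∧ d ≤ 4 * (s + s) - 1 ∧ 2 * d ≠ 7 * (s + s)) by omega)]
      rw [if_neg (show ¬(2 * (s + s) + 1 ≤ d ∧ d ≤ 3 * (s + s) - 1 ∧ 2 * d ≠ 5 * (s + s)) by omega)]
      rw [if_neg (show ¬(d % 2 = 1 ∧ d ≤ 2 * (s + s) - 1) by omega)]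
      rw [if_neg (show ¬(5 * (s + s) ≤ d ∧ d ≤ 6 * (s + s) - 1) by omega)]
      rw [if_neg (show ¬(4 * (s + s) ≤ d ∧ d ≤ 5 * (s + s) - 1) by omega)]
      rw [if_neg (show ¬(d = 3 * (s + s) - (s + s)) by omega)]
      rw [if_pos (show d = 3 * (s + s) by omega)]
      rw [if_neg (show ¬(d = s + s) by omega)]
      rw [if_neg (show ¬(d = 6 * (s + s) - 5 * s) by omega)]
      rw [if_neg (show ¬(d = 6 * (s + s)) by omega)]
      rw [if_neg (show ¬(d = 5 * s) by omega)]
    · rw [if_neg (show ¬(d % 2 = 0 ∧ 2 ≤ d ∧ d ≤ 2 * (s + s) - 2 ∧ d ≠ s + s) by omega)]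
      rw [if_pos (show 3 * (s + s) + 1 ≤ d ∧ d ≤ 4 * (s + s) - 1 ∧ 2 * d ≠ 7 * (s + s) by omega)]
      rw [if_neg (show ¬(2 * (s + s) + 1 ≤ d ∧ d ≤ 3 * (s + s) - 1 ∧ 2 * d ≠ 5 * (s + s)) by omega)]
      rw [if_neg (show ¬(d % 2 = 1 ∧ d ≤ 2 * (s + s) - 1) by omega)]
      rw [if_neg (show ¬(5 * (s + s) ≤ d ∧ d ≤ 6 * (s + s) - 1) by omega)]
      rw [if_neg (show ¬(4 * (s + s) ≤ d ∧ d ≤ 5 * (s + s) - 1) by omega)]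
      rw [if_neg (show ¬(d = 3 * (s + s) - (s + s)) by omega)]
      rw [if_neg (show ¬(d = 3 * (s + s)) by omega)]
      rw [if_neg (show ¬(d = s + s) by omega)]
      rw [if_neg (show ¬(d = 6 * (s + s) - 5 * s) by omega)]
      rw [if_neg (show ¬(d = 6 * (s + s)) by omega)]
      rw [if_neg (show ¬(d = 5 * s) by omega)]
    · rw [if_neg (show ¬(d % 2 = 0 ∧ 2 ≤ d ∧ d ≤ 2 * (s + s) - 2 ∧ d ≠ s + s) by omega)]
      rw [if_neg (show ¬(3 * (s + s) + 1 ≤ d ∧ d ≤ 4 * (s + s) - 1 ∧ 2 * d ≠ 7 * (s + s)) by omega)]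
      rw [if_neg (show ¬(2 * (s + s) + 1 ≤ d ∧ d ≤ 3 * (s + s) - 1 ∧ 2 * d ≠ 5 * (s + s)) by omega)]
      rw [if_neg (show ¬(d % 2 = 1 ∧ d ≤ 2 * (s + s) - 1) by omega)]
      rw [if_neg (show ¬(5 * (s + s) ≤ d ∧ d ≤ 6 * (s + s) - 1) by omega)]
      rw [if_neg (show ¬(4 * (s + s) ≤ d ∧ d ≤ 5 * (s + s) - 1) by omega)]
      rw [if_neg (show ¬(d = 3 * (s + s) - (s + s)) by omega)]
      rw [if_neg (show ¬(d = 3 * (s + s)) by omega)]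
      rw [if_neg (show ¬(d = s + s) by omega)]
      rw [if_pos (show d = 6 * (s + s) - 5 * s by omega)]
      rw [if_neg (show ¬(d = 6 * (s + s)) by omega)]
      rw [if_neg (show ¬(d = 5 * s) by omega)]
    · rw [if_neg (show ¬(d % 2 = 0 ∧ 2 ≤ d ∧ d ≤ 2 * (s + s) - 2 ∧ d ≠ s + s) by omega)]
      rw [if_neg (show ¬(3 * (s + s) + 1 ≤ d ∧ d ≤ 4 * (s + s) - 1 ∧ 2 * d ≠ 7 * (s + s)) by omega)]
      rw [if_neg (show ¬(2 * (s + s) + 1 ≤ d ∧ d ≤ 3 * (s + s) - 1 ∧ 2 * d ≠ 5 * (s + s)) by omega)]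
      rw [if_neg (show ¬(d % 2 = 1 ∧ d ≤ 2 * (s + s) - 1) by omega)]
      rw [if_neg (show ¬(5 * (s + s) ≤ d ∧ d ≤ 6 * (s + s) - 1) by omega)]
      rw [if_pos (show 4 * (s + s) ≤ d ∧ d ≤ 5 * (s + s) - 1 by omega)]
      rw [if_neg (show ¬(d = 3 * (s + s) - (s + s)) by omega)]
      rw [if_neg (show ¬(d = 3 * (s + s)) by omega)]
      rw [if_neg (show ¬(d = s + s) by omega)]
      rw [if_neg (show ¬(d = 6 * (s + s) - 5 * s) by omega)]
      rw [if_neg (show ¬(d = 6 * (s + s)) by omega)]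
      rw [if_neg (show ¬(d = 5 * s) by omega)]
    · rw [if_neg (show ¬(d % 2 = 0 ∧ 2 ≤ d ∧ d ≤ 2 * (s + s) - 2 ∧ d ≠ s + s) by omega)]
      rw [if_neg (show ¬(3 * (s + s) + 1 ≤ d ∧ d ≤ 4 * (s + s) - 1 ∧ 2 * d ≠ 7 * (s + s)) by omega)]
      rw [if_neg (show ¬(2 * (s + s) + 1 ≤ d ∧ d ≤ 3 * (s + s) - 1 ∧ 2 * d ≠ 5 * (s + s)) by omega)]
      rw [if_neg (show ¬(d % 2 = 1 ∧ d ≤ 2 * (s + s) - 1) by omega)]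
      rw [if_pos (show 5 * (s + s) ≤ d ∧ d ≤ 6 * (s + s) - 1 by omega)]
      rw [if_neg (show ¬(4 * (s + s) ≤ d ∧ d ≤ 5 * (s + s) - 1) by omega)]
      rw [if_neg (show ¬(d = 3 * (s + s) - (s + s)) by omega)]
      rw [if_neg (show ¬(d = 3 * (s + s)) by omega)]
      rw [if_neg (show ¬(d = s + s) by omega)]
      rw [if_neg (show ¬(d = 6 * (s + s) - 5 * s) by omega)]
      rw [if_neg (show ¬(d = 6 * (s + s)) by omega)]
      rw [if_neg (show ¬(d = 5 * s) by omega)]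
    · rw [if_neg (show ¬(d % 2 = 0 ∧ 2 ≤ d ∧ d ≤ 2 * (s + s) - 2 ∧ d ≠ s + s) by omega)]
      rw [if_neg (show ¬(3 * (s + s) + 1 ≤ d ∧ d ≤ 4 * (s + s) - 1 ∧ 2 * d ≠ 7 * (s + s)) by omega)]
      rw [if_neg (show ¬(2 * (s + s) + 1 ≤ d ∧ d ≤ 3 * (s + s) - 1 ∧ 2 * d ≠ 5 * (s + s)) by omega)]
      rw [if_neg (show ¬(d % 2 = 1 ∧ d ≤ 2 * (s + s) - 1) by omega)]
      rw [if_neg (show ¬(5 * (s + s) ≤ d ∧ d ≤ 6 * (s + s) - 1) by omega)]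
      rw [if_neg (show ¬(4 * (s + s) ≤ d ∧ d ≤ 5 * (s + s) - 1) by omega)]
      rw [if_neg (show ¬(d = 3 * (s + s) - (s + s)) by omega)]
      rw [if_neg (show ¬(d = 3 * (s + s)) by omega)]
      rw [if_neg (show ¬(d = s + s) by omega)]
      rw [if_neg (show ¬(d = 6 * (s + s) - 5 * s) by omega)]
      rw [if_pos (show d = 6 * (s + s) by omega)]
      rw [if_neg (show ¬(d = 5 * s) by omega)]
end

section
/- The ordered triples B_1 = (0,3,0) and B_2 = (0,5,0) of elements of Z_12 form a (12,3,1)-layered difference family: Δ*B_1 + Δ*B_2 = Σ_{g∈Z_12} g in the group ring Q[Z_12]. -/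
open Finset in
/-- `Δ* B` for an ordered `k`-multi-subset of `ZMod v`, in the group ring `ℚ[ZMod v]`. -/
noncomputable def deltaStar {v k : ℕ} (b : Fin k → ZMod v) :
    AddMonoidAlgebra ℚ (ZMod v) :=
  ∑ s1 : Fin k, ∑ s2 : Fin k,
    if s1 < s2 then
      ∑ ℓ ∈ Finset.range (s2.val - s1.val),
        ((s2.val - s1.val : ℚ))⁻¹ •
          (AddMonoidAlgebra.single (b s2 - b s1 + (ℓ : ZMod v)) (1 : ℚ) +
           AddMonoidAlgebra.single (b s1 - b s2 - (ℓ : ZMod v) - 1) (1 : ℚ))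
    else 0

lemma ama_add_app {v : ℕ} (f g : AddMonoidAlgebra ℚ (ZMod v)) (x : ZMod v) :
    (f + g).coeff x = f.coeff x + g.coeff x := rfl

lemma ama_single_app {v : ℕ} [NeZero v] (a x : ZMod v) (b : ℚ) :
    (AddMonoidAlgebra.single a b).coeff x = if a = x then b else 0 := Finsupp.single_apply

lemma ama_sum_app {ι : Type*} {v : ℕ} (s : Finset ι) (f : ι → AddMonoidAlgebra ℚ (ZMod v))
    (x : ZMod v) : (∑ i ∈ s, f i).coeff x = ∑ i ∈ s, (f i).coeff x := by
    rw [AddMonoidAlgebra.coeff_sum]; exact Finset.sum_apply' x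

/-- The ordered triples `(0,3,0)` and `(0,5,0)` over `ZMod 12` form a
`(12,3,1)`-layered difference family. -/
theorem stmt10 :
    deltaStar ![(0 : ZMod 12), 3, 0] + deltaStar ![(0 : ZMod 12), 5, 0] =
      ∑ g : ZMod 12, AddMonoidAlgebra.single g (1 : ℚ) := by
  simp only [deltaStar, Fin.sum_univ_succ, Fin.sum_univ_zero]
  norm_num [Fin.lt_def, Finset.sum_range_succ]
  ext a
  simp only [ama_add_app, ama_sum_app, ama_single_app]
  obtain ⟨k, rfl⟩ : ∃ k : Fin 12, ((k : ℕ) : ZMod 12) = a := ⟨a, ZMod.natCast_zmod_val a⟩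
  fin_cases k <;> simp (config := { decide := true }) <;> norm_num
end
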